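/- Boundedness and sign of the fractional Laplacian of the bump function (Lemma 6): Let α ∈ (0,2) and let ψ(x) = (1 − ‖x‖²)₊² on ℝ². For each x ∈ ℝ², the integral L_α ψ(x) = ∫_{ℝ²} (2ψ(x) − ψ(x+y) − ψ(x−y)) / (2‖y‖^{2+α}) dy converges absolutely, and there exists a constant k_α > 0 such that |L_α ψ(x)| ≤ k_α for all x ∈ ℝ². Moreover L_α ψ(x) ≤ 0 for all x with ‖x‖ ≥ 1. -/

import Mathlib

open MeasureTheory Real Set
open scoped ENNReal InnerProductSpace

noncomputable section

/-- The Euclidean plane `ℝ²`. -/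
abbrev Plane : Type := EuclideanSpace ℝ (Fin 2)

/-- The standard bump function `ψ(x) = (1 − ‖x‖²)₊²` on `ℝ²`. -/
def bump (x : Plane) : ℝ := (max (1 - ‖x‖ ^ 2) 0) ^ 2

/-- The (unnormalized) fractional Laplacian of a function on the plane, via the
symmetrized integral representation. -/
def fracLapKernel (α : ℝ) (w : Plane → ℝ) (x : Plane) : ℝ :=
  ∫ y : Plane, (2 * w x - w (x + y) - w (x - y)) / (2 * ‖y‖ ^ (2 + α))

lemma bump_nonneg (x : Plane) : 0 ≤ bump x := sq_nonneg _

lemma bump_le_one (x : Plane) : bump x ≤ 1 := by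
  have h1 : max (1 - ‖x‖ ^ 2) 0 ≤ 1 := by
    apply max_le (by nlinarith [sq_nonneg ‖x‖]) zero_le_one
  calc bump x ≤ 1 ^ 2 := by
        apply pow_le_pow_left₀ (le_max_right _ _) h1
    _ = 1 := one_pow 2
  
lemma bump_eq_zero_of_one_le {x : Plane} (h : 1 ≤ ‖x‖) : bump x = 0 := by
  have : 1 - ‖x‖ ^ 2 ≤ 0 := by nlinarith [norm_nonneg x]
  simp [bump, max_eq_right this]

lemma quad_ineq (u v : ℝ) :
    |max u 0 ^ 2 - max v 0 ^ 2 - 2 * max v 0 * (u - v)| ≤ (u - v) ^ 2 := by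
  rcases le_total u 0 with hu | hu <;> rcases le_total v 0 with hv | hv <;>
    rw [abs_le] <;> constructor <;>
    simp only [max_eq_right hu, max_eq_right hv, max_eq_left hu, max_eq_left hv] <;>
    nlinarith [sq_nonneg u, sq_nonneg v, sq_nonneg (u - v), sq_nonneg (u + v),
      mul_self_nonneg u, mul_self_nonneg v]

lemma abs_comb (P M C t b : ℝ)
    (hA : |P ^ 2 - C ^ 2 - 2 * C * (-(2 * t) - b)| ≤ (-(2 * t) - b) ^ 2)
    (hB : |M ^ 2 - C ^ 2 - 2 * C * (2 * t - b)| ≤ (2 * t - b) ^ 2)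
    (ht2 : t ^ 2 ≤ 4 * b) (hb1 : b ≤ 1) (hb0 : 0 ≤ b)
    (hC1 : C ≤ 1) (hC0 : 0 ≤ C) :
    |2 * C ^ 2 - P ^ 2 - M ^ 2| ≤ 38 * b := by
  rw [abs_le] at hA hB ⊢
  constructor <;>
    nlinarith [mul_nonneg hb0 (sub_nonneg.2 hb1), mul_nonneg (sub_nonneg.2 hC1) hb0,
      mul_nonneg hC0 hb0]

lemma delta_bound (x y : Plane) (hy : ‖y‖ ≤ 1) :
    |2 * bump x - bump (x + y) - bump (x - y)| ≤ 38 * ‖y‖ ^ 2 := by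
  by_cases hx : ‖x‖ ≤ 2
  · set c : ℝ := 1 - ‖x‖ ^ 2 with hc
    set p : ℝ := 1 - ‖x + y‖ ^ 2 with hpdef
    set m : ℝ := 1 - ‖x - y‖ ^ 2 with hmdef
    set t : ℝ := ⟪x, y⟫_ℝ with ht
    set b : ℝ := ‖y‖ ^ 2 with hb
    have hp : p = c - 2 * t - b := by
      rw [hpdef, hc, hb, ht, @norm_add_sq_real]; ring
    have hm : m = c + 2 * t - b := by
      rw [hmdef, hc, hb, ht, @norm_sub_sq_real]; ring
    have hA := quad_ineq p c
    have hB := quad_ineq m c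
    have ht2 : t ^ 2 ≤ 4 * b := by
      have h1 : |t| ≤ ‖x‖ * ‖y‖ := abs_real_inner_le_norm x y
      have h2 : ‖x‖ * ‖y‖ ≤ 2 * ‖y‖ := by
        apply mul_le_mul_of_nonneg_right hx (norm_nonneg y)
      have := sq_abs t
      nlinarith [norm_nonneg y, abs_nonneg t]
    have hb1 : b ≤ 1 := by rw [hb]; nlinarith [norm_nonneg y]
    have hb0 : 0 ≤ b := sq_nonneg _
    have hcp1 : max c 0 ≤ 1 := by
      apply max_le (by nlinarith [sq_nonneg ‖x‖]) zero_le_one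
    have hcp0 : 0 ≤ max c 0 := le_max_right _ _
    have hbump : 2 * bump x - bump (x + y) - bump (x - y)
        = 2 * max c 0 ^ 2 - max p 0 ^ 2 - max m 0 ^ 2 := rfl
    rw [show p - c = -(2 * t) - b from by rw [hp]; ring] at hA
    rw [show m - c = 2 * t - b from by rw [hm]; ring] at hB
    rw [hbump]
    exact abs_comb _ _ _ t b hA hB ht2 hb1 hb0 hcp1 hcp0
  · push_neg at hx
    have h1 : bump x = 0 := bump_eq_zero_of_one_le (by linarith)
    have h2 : bump (x + y) = 0 := by
      apply bump_eq_zero_of_one_le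
      have h4 : ‖x‖ ≤ ‖x + y‖ + ‖y‖ := by
        simpa using norm_add_le (x + y) (-y)
      linarith
    have h3 : bump (x - y) = 0 := by
      apply bump_eq_zero_of_one_le
      have h4 : ‖x‖ ≤ ‖x - y‖ + ‖y‖ := by
        simpa using norm_add_le (x - y) y
      linarith
    rw [h1, h2, h3]
    simp only [mul_zero, sub_zero, abs_zero, zero_sub, zero_sub]
    positivity

lemma delta_bound4 (x y : Plane) :
    |2 * bump x - bump (x + y) - bump (x - y)| ≤ 4 := by
  have h1 := bump_nonneg x; have h2 := bump_le_one x
  have h3 := bump_nonneg (x + y); have h4 := bump_le_one (x + y)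
  have h5 := bump_nonneg (x - y); have h6 := bump_le_one (x - y)
  rw [abs_le]; constructor <;> linarith

/-- Dominating function for the fractional Laplacian integrand. -/
def domG (α : ℝ) (y : Plane) : ℝ :=
  if ‖y‖ ≤ 1 then 19 * ‖y‖ ^ (-α) else 2 * ‖y‖ ^ (-(2 + α))

lemma domG_nonneg (α : ℝ) (y : Plane) : 0 ≤ domG α y := by
  unfold domG; split <;> positivity

lemma integrand_le_domG (α : ℝ) (hα0 : 0 < α) (x y : Plane) :
    |(2 * bump x - bump (x + y) - bump (x - y)) / (2 * ‖y‖ ^ (2 + α))| ≤ domG α y := by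
  by_cases hy0 : y = 0
  · subst hy0
    simp only [norm_zero, add_zero, sub_zero]
    rw [Real.zero_rpow (by positivity), mul_zero, div_zero, abs_zero]
    exact domG_nonneg α 0
  · have hy : (0 : ℝ) < ‖y‖ := norm_pos_iff.2 hy0
    have hden : (0 : ℝ) < 2 * ‖y‖ ^ (2 + α) := by positivity
    rw [abs_div, abs_of_pos hden, div_le_iff₀ hden]
    unfold domG
    split_ifs with h1
    · calc |2 * bump x - bump (x + y) - bump (x - y)| ≤ 38 * ‖y‖ ^ 2 := delta_bound x y h1
        _ = 19 * ‖y‖ ^ (-α) * (2 * ‖y‖ ^ (2 + α)) := by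
            rw [show (19 : ℝ) * ‖y‖ ^ (-α) * (2 * ‖y‖ ^ (2 + α))
                = 38 * (‖y‖ ^ (-α) * ‖y‖ ^ (2 + α)) from by ring,
              ← Real.rpow_add hy, show -α + (2 + α) = (2 : ℝ) from by ring,
              Real.rpow_two]
    · calc |2 * bump x - bump (x + y) - bump (x - y)| ≤ 4 := delta_bound4 x y
        _ = 2 * ‖y‖ ^ (-(2 + α)) * (2 * ‖y‖ ^ (2 + α)) := by
            rw [show (2 : ℝ) * ‖y‖ ^ (-(2 + α)) * (2 * ‖y‖ ^ (2 + α))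
                = 4 * (‖y‖ ^ (-(2 + α)) * ‖y‖ ^ (2 + α)) from by ring,
              ← Real.rpow_add hy, show -(2 + α) + (2 + α) = (0 : ℝ) from by ring,
              Real.rpow_zero, mul_one]

lemma integrableOn_rpow_neg_closedBall {α : ℝ} (hα0 : 0 < α) (hα2 : α < 2) :
    IntegrableOn (fun y : Plane => ‖y‖ ^ (-α)) (Metric.closedBall 0 1) := by
  have hmeas : Measurable fun y : Plane => ‖y‖ ^ (-α) := by fun_prop
  constructor
  · exact hmeas.aestronglyMeasurable
  · rw [hasFiniteIntegral_iff_ofReal (ae_of_all _ fun y => by positivity)]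
    rw [MeasureTheory.lintegral_eq_lintegral_meas_le _
      (ae_of_all _ fun y => by positivity) hmeas.aemeasurable]
    set μ := volume.restrict (Metric.closedBall (0 : Plane) 1) with hμ
    set f := fun t : ℝ => μ {a : Plane | t ≤ ‖a‖ ^ (-α)} with hf
    calc ∫⁻ t in Ioi 0, f t ≤ ∫⁻ t in Ioc 0 1 ∪ Ioi 1, f t :=
          lintegral_mono_set Ioi_subset_Ioc_union_Ioi
      _ ≤ (∫⁻ t in Ioc 0 1, f t) + ∫⁻ t in Ioi 1, f t := lintegral_union_le _ _ _
      _ < ∞ := ENNReal.add_lt_top.2 ⟨?_, ?_⟩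
    · -- near 0: bounded by the measure of the ball
      have hb : ∀ t ∈ Ioc (0:ℝ) 1, f t ≤ volume (Metric.closedBall (0 : Plane) 1) := by
        intro t ht
        calc f t ≤ μ univ := measure_mono (subset_univ _)
          _ = volume (Metric.closedBall (0 : Plane) 1) := by
              rw [hμ, Measure.restrict_apply_univ]
      calc (∫⁻ t in Ioc 0 1, f t)
          ≤ ∫⁻ _ in Ioc (0:ℝ) 1, volume (Metric.closedBall (0 : Plane) 1) :=
            setLIntegral_mono' measurableSet_Ioc hb
        _ = volume (Metric.closedBall (0 : Plane) 1) * volume (Ioc (0:ℝ) 1) := by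
            rw [setLIntegral_const]
        _ < ∞ := by
            apply ENNReal.mul_lt_top measure_closedBall_lt_top
            simp [Real.volume_Ioc]
    · -- tail: bounded by measure of shrinking balls
      have hsub : ∀ t ∈ Ioi (1:ℝ), f t ≤
          ENNReal.ofReal ((t ^ (-α⁻¹)) ^ Module.finrank ℝ Plane) * volume (Metric.ball (0 : Plane) 1) := by
        intro t ht
        have ht1 : (1:ℝ) < t := ht
        have ht0 : (0:ℝ) < t := by linarith
        have hincl : {a : Plane | t ≤ ‖a‖ ^ (-α)} ⊆ Metric.closedBall 0 (t ^ (-α⁻¹)) := by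
          intro a ha
          simp only [mem_setOf_eq] at ha
          simp only [Metric.mem_closedBall, dist_zero_right]
          have hna : (0:ℝ) < ‖a‖ := by
            rcases eq_or_lt_of_le (norm_nonneg a) with h | h
            · exfalso
              rw [← h, Real.zero_rpow (neg_ne_zero.2 hα0.ne')] at ha
              linarith
            · exact h
          have := Real.rpow_le_rpow_of_nonpos ht0 ha (neg_nonpos.2 (inv_nonneg.2 hα0.le))
          calc ‖a‖ = (‖a‖ ^ (-α)) ^ (-α⁻¹) := by
                rw [← Real.rpow_mul (norm_nonneg a),
                  show (-α) * (-α⁻¹) = α * α⁻¹ from by ring,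
                  mul_inv_cancel₀ (ne_of_gt hα0), Real.rpow_one]
            _ ≤ t ^ (-α⁻¹) := this
        calc f t ≤ volume (Metric.closedBall (0 : Plane) (t ^ (-α⁻¹))) :=
              le_trans (measure_mono hincl) (Measure.restrict_apply_le _ _)
          _ = ENNReal.ofReal ((t ^ (-α⁻¹)) ^ Module.finrank ℝ Plane) * volume (Metric.ball (0 : Plane) 1) :=
              Measure.addHaar_closedBall _ _ (by positivity)
      have hs : -(2 * α⁻¹) < -1 := by
        have h1 : (1:ℝ) < 2 / α := (one_lt_div hα0).2 hα2
        have h2 : (2:ℝ) / α = 2 * α⁻¹ := div_eq_mul_inv 2 α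
        linarith
      have heq : ∀ t ∈ Ioi (1:ℝ),
          ENNReal.ofReal ((t ^ (-α⁻¹)) ^ Module.finrank ℝ Plane) * volume (Metric.ball (0 : Plane) 1)
          = ENNReal.ofReal (t ^ (-(2 * α⁻¹))) * volume (Metric.ball (0 : Plane) 1) := by
        intro t ht
        have ht0 : (0:ℝ) ≤ t := le_of_lt (lt_trans one_pos ht)
        rw [finrank_euclideanSpace_fin, ← Real.rpow_natCast (t ^ (-α⁻¹)) 2,
          ← Real.rpow_mul ht0, show (-α⁻¹) * ((2:ℕ):ℝ) = -(2 * α⁻¹) from by push_cast; ring]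
      calc ∫⁻ t in Ioi 1, f t
          ≤ ∫⁻ t in Ioi 1, ENNReal.ofReal ((t ^ (-α⁻¹)) ^ Module.finrank ℝ Plane)
              * volume (Metric.ball (0 : Plane) 1) :=
            setLIntegral_mono' measurableSet_Ioi hsub
        _ = ∫⁻ t in Ioi 1, ENNReal.ofReal (t ^ (-(2 * α⁻¹))) * volume (Metric.ball (0 : Plane) 1) :=
            setLIntegral_congr_fun measurableSet_Ioi (fun t ht => heq t ht)
        _ = (∫⁻ t in Ioi 1, ENNReal.ofReal (t ^ (-(2 * α⁻¹)))) * volume (Metric.ball (0 : Plane) 1) :=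
            lintegral_mul_const' _ _ measure_ball_lt_top.ne
        _ < ∞ := by
            apply ENNReal.mul_lt_top _ measure_ball_lt_top
            exact IntegrableOn.setLIntegral_lt_top (integrableOn_Ioi_rpow_of_lt hs one_pos)

lemma integrable_domG {α : ℝ} (hα0 : 0 < α) (hα2 : α < 2) :
    Integrable (domG α) := by
  rw [← integrableOn_univ, ← union_compl_self (Metric.closedBall (0 : Plane) 1)]
  apply IntegrableOn.union
  · apply IntegrableOn.congr_fun
      (((integrableOn_rpow_neg_closedBall hα0 hα2)).const_mul 19)
      _ measurableSet_closedBall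
    intro y hy
    rw [Metric.mem_closedBall, dist_zero_right] at hy
    simp [domG, hy]
  · have hnr : (Module.finrank ℝ Plane : ℝ) < 2 + α := by
      rw [finrank_euclideanSpace_fin]; norm_num; linarith
    have hbase : Integrable (fun y : Plane => 2 * 2 ^ (2 + α) * (1 + ‖y‖) ^ (-(2 + α))) :=
      (integrable_one_add_norm hnr).const_mul _
    apply Integrable.mono' hbase.integrableOn
    · apply AEStronglyMeasurable.restrict
      apply Measurable.aestronglyMeasurable
      apply Measurable.ite (measurableSet_le measurable_norm measurable_const) <;> fun_prop
    · rw [ae_restrict_iff' measurableSet_closedBall.compl]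
      apply ae_of_all
      intro y hy
      rw [mem_compl_iff, Metric.mem_closedBall, dist_zero_right, not_le] at hy
      have hy0 : (0:ℝ) < ‖y‖ := lt_trans one_pos hy
      have hA : (0:ℝ) < ‖y‖ ^ (2 + α) := Real.rpow_pos_of_pos hy0 _
      have hB : (0:ℝ) < (1 + ‖y‖) ^ (2 + α) := Real.rpow_pos_of_pos (by linarith) _
      have hAB : (1 + ‖y‖) ^ (2 + α) ≤ 2 ^ (2 + α) * ‖y‖ ^ (2 + α) := by
        rw [← Real.mul_rpow (by norm_num) (le_of_lt hy0)]
        exact Real.rpow_le_rpow (by linarith) (by linarith) (by linarith)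
      have hkey : (‖y‖ ^ (2 + α))⁻¹ ≤ 2 ^ (2 + α) * ((1 + ‖y‖) ^ (2 + α))⁻¹ := by
        have h1 : 1 / ‖y‖ ^ (2 + α) ≤ 2 ^ (2 + α) / (1 + ‖y‖) ^ (2 + α) := by
          rw [div_le_div_iff₀ hA hB]
          linarith
        rw [one_div] at h1
        rw [div_eq_mul_inv] at h1
        exact h1
      have hdomG : domG α y = 2 * (‖y‖ ^ (2 + α))⁻¹ := by
        rw [domG, if_neg (not_le.2 hy), Real.rpow_neg (le_of_lt hy0)]
      rw [Real.norm_eq_abs, abs_of_nonneg (domG_nonneg α y), hdomG,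
        Real.rpow_neg (by linarith : (0:ℝ) ≤ 1 + ‖y‖)]
      calc 2 * (‖y‖ ^ (2 + α))⁻¹ ≤ 2 * (2 ^ (2 + α) * ((1 + ‖y‖) ^ (2 + α))⁻¹) := by
            linarith
        _ = 2 * 2 ^ (2 + α) * ((1 + ‖y‖) ^ (2 + α))⁻¹ := by ring

lemma continuous_bump : Continuous bump := by
  unfold bump; fun_prop

lemma integrable_integrand {α : ℝ} (hα0 : 0 < α) (hα2 : α < 2) (x : Plane) :
    Integrable (fun y : Plane =>
      (2 * bump x - bump (x + y) - bump (x - y)) / (2 * ‖y‖ ^ (2 + α))) := by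
  apply (integrable_domG hα0 hα2).mono'
  · apply Measurable.aestronglyMeasurable
    apply Measurable.div
    · have h1 : Continuous fun y : Plane => 2 * bump x - bump (x + y) - bump (x - y) := by
        apply Continuous.sub
        apply Continuous.sub continuous_const
        · exact continuous_bump.comp (continuous_const.add continuous_id)
        · exact continuous_bump.comp (continuous_const.sub continuous_id)
      exact h1.measurable
    · fun_prop
  · exact ae_of_all _ fun y => by
      rw [Real.norm_eq_abs]; exact integrand_le_domG α hα0 x y

/-- **Boundedness and sign of the fractional Laplacian of the bump function** (Lemma 6).
For `α ∈ (0,2)` the integral defining `L_α ψ(x)` converges absolutely for every `x`,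
`|L_α ψ|` is bounded by a constant `k_α > 0`, and `L_α ψ(x) ≤ 0` for `‖x‖ ≥ 1`. -/
theorem fracLap_bump_bounded_and_sign (α : ℝ) (hα0 : 0 < α) (hα2 : α < 2) :
    (∀ x : Plane, Integrable (fun y : Plane =>
      (2 * bump x - bump (x + y) - bump (x - y)) / (2 * ‖y‖ ^ (2 + α)))) ∧
    (∃ k : ℝ, 0 < k ∧ ∀ x : Plane, |fracLapKernel α bump x| ≤ k) ∧
    (∀ x : Plane, 1 ≤ ‖x‖ → fracLapKernel α bump x ≤ 0) := by
  refine ⟨fun x => integrable_integrand hα0 hα2 x, ⟨(∫ y : Plane, domG α y) + 1, ?_, ?_⟩, ?_⟩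
  · have h : 0 ≤ ∫ y : Plane, domG α y := integral_nonneg (domG_nonneg α)
    linarith
  · intro x
    have h := norm_integral_le_of_norm_le (integrable_domG hα0 hα2)
      (ae_of_all _ fun y => by
        rw [Real.norm_eq_abs]
        exact integrand_le_domG α hα0 x y)
    rw [fracLapKernel, ← Real.norm_eq_abs]
    linarith
  · intro x hx
    rw [fracLapKernel]
    apply integral_nonpos
    intro y
    apply div_nonpos_of_nonpos_of_nonneg
    · rw [bump_eq_zero_of_one_le hx]
      have h1 := bump_nonneg (x + y)
      have h2 := bump_nonneg (x - y)
      simp only [Pi.zero_apply]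
      linarith
    · positivity
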